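/- In the targeted sPCE setup, the contrastive (denominator) gap is nonnegative: E[log p̂_L − log m(h)] ≥ 0. -/

import Mathlib

open MeasureTheory ProbabilityTheory
open scoped ENNReal
theorem targeted_sPCE_contrastive_gap_nonneg
    {Ω ΘT ΘN H : Type*}
    [MeasurableSpace Ω] [MeasurableSpace ΘT] [MeasurableSpace ΘN] [MeasurableSpace H]
    (P : Measure Ω) [IsProbabilityMeasure P]
    (μT : Measure ΘT) [IsProbabilityMeasure μT]
    (ν : Kernel ΘT ΘN) [IsMarkovKernel ν]
    (lam : Measure H) [SigmaFinite lam]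
    (f : ΘT × ΘN → H → ℝ)
    (hf_meas : Measurable fun p : (ΘT × ΘN) × H => f p.1 p.2)
    (hf_nonneg : ∀ θ x, 0 ≤ f θ x)
    (hf_dens : ∀ θ, ∫ x, f θ x ∂lam = 1)
    (L M : ℕ) (hL : 1 ≤ L) (hM : 1 ≤ M)
    (θ0 : Ω → ΘT × ΘN) (h : Ω → H)
    (θs : Ω → Fin L → ΘT × ΘN) (ηs : Ω → Fin M → ΘN)
    (hθ0 : Measurable θ0) (hh : Measurable h) (hθs : Measurable θs) (hηs : Measurable ηs)
    -- the joint law of (θ⁽⁰⁾, h, θ⁽¹⁾,…,θ⁽ᴸ⁾, η⁽¹⁾,…,η⁽ᴹ⁾):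
    (hlaw : ∀ φ : (ΘT × ΘN) × H × (Fin L → ΘT × ΘN) × (Fin M → ΘN) → ℝ≥0∞,
      Measurable φ →
      ∫⁻ ω, φ (θ0 ω, h ω, θs ω, ηs ω) ∂P
        = ∫⁻ θ, (∫⁻ x, ENNReal.ofReal (f θ x) *
            (∫⁻ ts, (∫⁻ es, φ (θ, x, ts, es)
                ∂(Measure.pi fun _ : Fin M => ν θ.1))
              ∂(Measure.pi fun _ : Fin L => μT.compProd ν)) ∂lam)
          ∂(μT.compProd ν))
    -- the target-conditional marginal g and the full marginal m:
    (g : ΘT → H → ℝ) (hg : ∀ θT x, g θT x = ∫ η, f (θT, η) x ∂(ν θT))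
    (mf : H → ℝ) (hmf : ∀ x, mf x = ∫ θ, f θ x ∂(μT.compProd ν))
    -- the estimators p̂_M and p̂_L:
    (pM : Ω → ℝ) (hpM : ∀ ω, pM ω = (M : ℝ)⁻¹ * ∑ i, f ((θ0 ω).1, ηs ω i) (h ω))
    (pL : Ω → ℝ)
    (hpL : ∀ ω, pL ω = ((L : ℝ) + 1)⁻¹ * (f (θ0 ω) (h ω) + ∑ ℓ, f (θs ω ℓ) (h ω)))
    -- almost sure positivity of the likelihoods and marginals:
    (hpos : ∀ᵐ ω ∂P, 0 < f (θ0 ω) (h ω) ∧ (∀ ℓ, 0 < f (θs ω ℓ) (h ω)) ∧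
      (∀ i, 0 < f ((θ0 ω).1, ηs ω i) (h ω)) ∧
      0 < g (θ0 ω).1 (h ω) ∧ 0 < mf (h ω))
    -- the expectation appearing in the statement is finite:
    (hint_gap : Integrable (fun ω => Real.log (pL ω) - Real.log (mf (h ω))) P) :
    -- the contrastive (denominator) gap is nonnegative: E[log p̂_L − log m(h)] ≥ 0
    0 ≤ ∫ ω, (Real.log (pL ω) - Real.log (mf (h ω))) ∂P := by
  classical
  set μ' : Measure (ΘT × ΘN) := μT.compProd ν with hμ'
  set πL : Measure (Fin L → ΘT × ΘN) := Measure.pi (fun _ => μ') with hπL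
  set π : Measure (Fin (L + 1) → ΘT × ΘN) := Measure.pi (fun _ => μ') with hπ
  -- basic measurability
  have hmf_m : Measurable mf := by
    have h1 : Measurable fun x : H => ∫ θ, f θ x ∂μ' :=
      (hf_meas.stronglyMeasurable.integral_prod_left').measurable
    have : mf = fun x => ∫ θ, f θ x ∂μ' := funext hmf
    rw [this]; exact h1
  have hmf_nonneg : ∀ x, 0 ≤ mf x := fun x => by
    rw [hmf]; exact integral_nonneg fun θ => hf_nonneg θ x
  -- the real-valued denominator-ratio function on tuples
  set D : (ΘT × ΘN) × H × (Fin L → ΘT × ΘN) → ℝ :=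
    fun q => mf q.2.1 / (((L : ℝ) + 1)⁻¹ * (f q.1 q.2.1 + ∑ ℓ, f (q.2.2 ℓ) q.2.1)) with hD
  have hD_m : Measurable D := by
    apply Measurable.div
    · exact hmf_m.comp (measurable_fst.comp measurable_snd)
    · apply Measurable.const_mul
      apply Measurable.add
      · exact hf_meas.comp (measurable_fst.prodMk (measurable_fst.comp measurable_snd))
      · apply Finset.measurable_sum
        intro ℓ _
        have h1 : Measurable fun q : (ΘT × ΘN) × H × (Fin L → ΘT × ΘN) => q.2.2 ℓ :=
          (measurable_pi_apply ℓ).comp (measurable_snd.comp measurable_snd)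
        have h2 : Measurable fun q : (ΘT × ΘN) × H × (Fin L → ΘT × ΘN) => q.2.1 :=
          measurable_fst.comp measurable_snd
        exact hf_meas.comp (h1.prodMk h2)
  set φ : (ΘT × ΘN) × H × (Fin L → ΘT × ΘN) × (Fin M → ΘN) → ℝ≥0∞ :=
    fun q => ENNReal.ofReal (D (q.1, q.2.1, q.2.2.1)) with hφ
  have hφ_m : Measurable φ :=
    ENNReal.measurable_ofReal.comp (hD_m.comp
      (measurable_fst.prodMk ((measurable_fst.comp measurable_snd).prodMk
        (measurable_fst.comp (measurable_snd.comp measurable_snd)))))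
  -- integrability of x ↦ f θ x
  have hfint : ∀ θ, Integrable (fun x => f θ x) lam := by
    intro θ
    by_contra hc
    have hd := hf_dens θ
    rw [integral_undef hc] at hd
    exact one_ne_zero hd.symm
  -- key : E[ofReal (mf/pL)] ≤ 1
  have key : (∫⁻ ω, ENNReal.ofReal (mf (h ω) / pL ω) ∂P) ≤ 1 := by
    have hLHS : (∫⁻ ω, ENNReal.ofReal (mf (h ω) / pL ω) ∂P)
        = ∫⁻ ω, φ (θ0 ω, h ω, θs ω, ηs ω) ∂P := by
      apply lintegral_congr
      intro ω
      simp only [hφ, hD]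
      rw [hpL ω]
    rw [hLHS, hlaw φ hφ_m]
    -- kill the es-integral
    have hes : ∀ θ : ΘT × ΘN, ∀ x ts,
        (∫⁻ es, φ (θ, x, ts, es) ∂(Measure.pi fun _ : Fin M => ν θ.1))
          = ENNReal.ofReal (D (θ, x, ts)) := by
      intro θ x ts
      simp [hφ, lintegral_const]
    simp only [hes]
    -- pull ofReal (f θ x) inside the ts-integral
    have hpull : ∀ θ : ΘT × ΘN, ∀ x : H,
        ENNReal.ofReal (f θ x) * (∫⁻ ts, ENNReal.ofReal (D (θ, x, ts)) ∂πL)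
          = ∫⁻ ts, ENNReal.ofReal (f θ x) * ENNReal.ofReal (D (θ, x, ts)) ∂πL :=
      fun θ x => (lintegral_const_mul' _ _ ENNReal.ofReal_ne_top).symm
    simp only [hpull]
    -- the joint (θ, x, ts) integrand and its measurability
    set A : ((ΘT × ΘN) × H) × (Fin L → ΘT × ΘN) → ℝ≥0∞ :=
      fun p => ENNReal.ofReal (f p.1.1 p.1.2) * ENNReal.ofReal (D (p.1.1, p.1.2, p.2)) with hA
    have hA_m : Measurable A := by
      refine Measurable.mul (f := fun p : ((ΘT × ΘN) × H) × (Fin L → ΘT × ΘN) =>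
        ENNReal.ofReal (f p.1.1 p.1.2))
        (g := fun p => ENNReal.ofReal (D (p.1.1, p.1.2, p.2))) ?_ ?_
      · exact ENNReal.measurable_ofReal.comp (hf_meas.comp measurable_fst)
      · apply ENNReal.measurable_ofReal.comp
        apply hD_m.comp
        exact (measurable_fst.comp measurable_fst).prodMk
          ((measurable_snd.comp measurable_fst).prodMk measurable_snd)
    -- Tonelli: swap the θ and x integrals
    have hswap1 :
        (∫⁻ θ, ∫⁻ x, ∫⁻ ts, ENNReal.ofReal (f θ x) * ENNReal.ofReal (D (θ, x, ts)) ∂πL ∂lam ∂μ')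
          = ∫⁻ x, ∫⁻ θ, ∫⁻ ts, ENNReal.ofReal (f θ x) * ENNReal.ofReal (D (θ, x, ts)) ∂πL ∂μ' ∂lam := by
      exact lintegral_lintegral_swap (hA_m.lintegral_prod_right').aemeasurable
    rw [hswap1]
    -- per-x bound via exchangeability
    have hperx : ∀ x : H,
        (∫⁻ θ, ∫⁻ ts, ENNReal.ofReal (f θ x) * ENNReal.ofReal (D (θ, x, ts)) ∂πL ∂μ')
          ≤ ENNReal.ofReal (mf x) := by
      intro x
      set S : (Fin (L + 1) → ΘT × ΘN) → ℝ := fun v => ∑ j, f (v j) x with hS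
      set W : (Fin (L + 1) → ΘT × ΘN) → ℝ≥0∞ :=
        fun v => ENNReal.ofReal (mf x / (((L : ℝ) + 1)⁻¹ * S v)) with hW
      have hfvj : ∀ j : Fin (L + 1), Measurable fun v : Fin (L + 1) → ΘT × ΘN => f (v j) x := by
        intro j
        have hg : Measurable fun v : Fin (L + 1) → ΘT × ΘN => ((v j, x) : (ΘT × ΘN) × H) :=
          (measurable_pi_apply j).prodMk measurable_const
        exact hf_meas.comp hg
      have hS_m : Measurable S := Finset.measurable_sum _ fun j _ => hfvj j
      have hW_m : Measurable W :=
        ENNReal.measurable_ofReal.comp (measurable_const.div (hS_m.const_mul _))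
      have hFj : ∀ j : Fin (L + 1),
          Measurable fun v => ENNReal.ofReal (f (v j) x) * W v := by
        intro j
        exact (ENNReal.measurable_ofReal.comp (hfvj j)).mul hW_m
      set Ax : (ΘT × ΘN) × (Fin L → ΘT × ΘN) → ℝ≥0∞ :=
        fun p => ENNReal.ofReal (f p.1 x) * ENNReal.ofReal (D (p.1, x, p.2)) with hAx
      have hAx_m : Measurable Ax := by
        refine Measurable.mul (f := fun p : (ΘT × ΘN) × (Fin L → ΘT × ΘN) =>
          ENNReal.ofReal (f p.1 x)) (g := fun p => ENNReal.ofReal (D (p.1, x, p.2))) ?_ ?_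
        · exact ENNReal.measurable_ofReal.comp
            (hf_meas.comp (measurable_fst.prodMk measurable_const))
        · exact ENNReal.measurable_ofReal.comp (hD_m.comp
            (measurable_fst.prodMk (measurable_const.prodMk measurable_snd)))
      set T := MeasurableEquiv.piFinSuccAbove (fun _ : Fin (L + 1) => ΘT × ΘN) 0 with hT
      have hTP : MeasurePreserving T π (μ'.prod πL) :=
        measurePreserving_piFinSuccAbove (fun _ : Fin (L + 1) => μ') 0
      have e1 : (∫⁻ θ, ∫⁻ ts, ENNReal.ofReal (f θ x) * ENNReal.ofReal (D (θ, x, ts)) ∂πL ∂μ')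
          = ∫⁻ p, Ax p ∂(μ'.prod πL) := (lintegral_prod Ax hAx_m.aemeasurable).symm
      have e2 : (∫⁻ p, Ax p ∂(μ'.prod πL)) = ∫⁻ v, Ax (T v) ∂π :=
        (hTP.lintegral_comp hAx_m).symm
      have e3 : ∀ v, Ax (T v) = ENNReal.ofReal (f (v 0) x) * W v := by
        intro v
        have hTv : T v = (v 0, Fin.tail v) := by
          simp [hT, MeasurableEquiv.piFinSuccAbove]
        rw [hTv]
        simp only [hAx, hW, hD, hS]
        congr 2
        rw [Fin.sum_univ_succ]
        rfl
      have hswapj : ∀ j : Fin (L + 1),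
          (∫⁻ v, ENNReal.ofReal (f (v j) x) * W v ∂π)
            = ∫⁻ v, ENNReal.ofReal (f (v 0) x) * W v ∂π := by
        intro j
        have hmp : MeasurePreserving
            (MeasurableEquiv.piCongrLeft (fun _ : Fin (L + 1) => ΘT × ΘN) (Equiv.swap 0 j)) π π :=
          measurePreserving_piCongrLeft (fun _ : Fin (L + 1) => μ') (Equiv.swap 0 j)
        have hcomp := hmp.lintegral_comp (hFj j)
        rw [← hcomp]
        apply lintegral_congr
        intro v
        have hEv : (MeasurableEquiv.piCongrLeft (fun _ : Fin (L + 1) => ΘT × ΘN)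
            (Equiv.swap 0 j)) v = fun i => v (Equiv.swap 0 j i) := by
          funext i
          simp [MeasurableEquiv.piCongrLeft, Equiv.piCongrLeft_apply_eq_cast]
        rw [hEv]
        have hS' : S (fun i => v (Equiv.swap 0 j i)) = S v := by
          simp only [hS]
          exact Equiv.sum_comp (Equiv.swap 0 j) (fun i => f (v i) x)
        simp only [hW, hS', Equiv.swap_apply_right]
      have hsum : ((L + 1 : ℕ) : ℝ≥0∞) * (∫⁻ v, ENNReal.ofReal (f (v 0) x) * W v ∂π)
          = ∫⁻ v, ENNReal.ofReal (S v) * W v ∂π := by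
        have h1 : (∑ j : Fin (L + 1), ∫⁻ v, ENNReal.ofReal (f (v j) x) * W v ∂π)
            = ((L + 1 : ℕ) : ℝ≥0∞) * (∫⁻ v, ENNReal.ofReal (f (v 0) x) * W v ∂π) := by
          rw [Finset.sum_congr rfl fun j _ => hswapj j]
          rw [Finset.sum_const, Finset.card_univ, Fintype.card_fin, nsmul_eq_mul]
        rw [← h1, ← lintegral_finset_sum _ fun j _ => hFj j]
        apply lintegral_congr
        intro v
        rw [← Finset.sum_mul, hS, ENNReal.ofReal_sum_of_nonneg fun j _ => hf_nonneg _ _]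
      have hb : (∫⁻ v, ENNReal.ofReal (S v) * W v ∂π)
          ≤ ENNReal.ofReal (((L : ℝ) + 1) * mf x) := by
        have hpt : ∀ v, ENNReal.ofReal (S v) * W v ≤ ENNReal.ofReal (((L : ℝ) + 1) * mf x) := by
          intro v
          have hSnn : 0 ≤ S v := Finset.sum_nonneg fun j _ => hf_nonneg _ _
          rw [hW, ← ENNReal.ofReal_mul hSnn]
          apply ENNReal.ofReal_le_ofReal
          rcases eq_or_lt_of_le hSnn with h0 | h0
          · rw [← h0]
            simpa using mul_nonneg (by positivity : (0:ℝ) ≤ (L : ℝ) + 1) (hmf_nonneg x)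
          · have hs0 : S v ≠ 0 := ne_of_gt h0
            have hL1 : ((L : ℝ) + 1) ≠ 0 := by positivity
            rw [show S v * (mf x / (((L : ℝ) + 1)⁻¹ * S v)) = ((L : ℝ) + 1) * mf x by
              field_simp]
        exact (lintegral_mono hpt).trans (by rw [lintegral_const, measure_univ, mul_one])
      have hJ : (∫⁻ v, ENNReal.ofReal (f (v 0) x) * W v ∂π) ≤ ENNReal.ofReal (mf x) := by
        have hc : ((L + 1 : ℕ) : ℝ≥0∞) ≠ 0 := by simp
        have hct : ((L + 1 : ℕ) : ℝ≥0∞) ≠ ⊤ := by simp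
        have hb2 : ((L + 1 : ℕ) : ℝ≥0∞) * (∫⁻ v, ENNReal.ofReal (f (v 0) x) * W v ∂π)
            ≤ ENNReal.ofReal (((L : ℝ) + 1) * mf x) := by rw [hsum]; exact hb
        calc (∫⁻ v, ENNReal.ofReal (f (v 0) x) * W v ∂π)
            = ((L + 1 : ℕ) : ℝ≥0∞)⁻¹ *
              (((L + 1 : ℕ) : ℝ≥0∞) * ∫⁻ v, ENNReal.ofReal (f (v 0) x) * W v ∂π) := by
              rw [← mul_assoc, ENNReal.inv_mul_cancel hc hct, one_mul]
          _ ≤ ((L + 1 : ℕ) : ℝ≥0∞)⁻¹ * ENNReal.ofReal (((L : ℝ) + 1) * mf x) :=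
              mul_le_mul_right hb2 _
          _ = ENNReal.ofReal (mf x) := by
              have hnat : ((L + 1 : ℕ) : ℝ≥0∞) = ENNReal.ofReal ((L : ℝ) + 1) := by
                rw [← ENNReal.ofReal_natCast (L + 1)]
                norm_num
              rw [hnat, ← ENNReal.ofReal_inv_of_pos (by positivity),
                ← ENNReal.ofReal_mul (by positivity)]
              congr 1
              field_simp
      calc (∫⁻ θ, ∫⁻ ts, ENNReal.ofReal (f θ x) * ENNReal.ofReal (D (θ, x, ts)) ∂πL ∂μ')
          = ∫⁻ v, Ax (T v) ∂π := by rw [e1, e2]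
        _ = ∫⁻ v, ENNReal.ofReal (f (v 0) x) * W v ∂π := lintegral_congr e3
        _ ≤ ENNReal.ofReal (mf x) := hJ
    -- assemble: integrate over x and use that marginals integrate to 1
    calc (∫⁻ x, ∫⁻ θ, ∫⁻ ts, ENNReal.ofReal (f θ x) * ENNReal.ofReal (D (θ, x, ts)) ∂πL ∂μ' ∂lam)
        ≤ ∫⁻ x, ENNReal.ofReal (mf x) ∂lam := lintegral_mono hperx
      _ ≤ ∫⁻ x, ∫⁻ θ, ENNReal.ofReal (f θ x) ∂μ' ∂lam := by
          apply lintegral_mono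
          intro x
          show ENNReal.ofReal (mf x) ≤ ∫⁻ θ, ENNReal.ofReal (f θ x) ∂μ'
          by_cases hi : Integrable (fun θ => f θ x) μ'
          · rw [hmf x, ofReal_integral_eq_lintegral_ofReal hi
              (ae_of_all _ fun θ => hf_nonneg θ x)]
          · rw [hmf x, integral_undef hi]
            simp
      _ = ∫⁻ θ, ∫⁻ x, ENNReal.ofReal (f θ x) ∂lam ∂μ' := by
          exact lintegral_lintegral_swap
            (ENNReal.measurable_ofReal.comp
              (hf_meas.comp (measurable_snd.prodMk measurable_fst))).aemeasurable
      _ = ∫⁻ θ, 1 ∂μ' := by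
          apply lintegral_congr
          intro θ
          rw [← ofReal_integral_eq_lintegral_ofReal (hfint θ) (ae_of_all _ (hf_nonneg θ)),
            hf_dens θ, ENNReal.ofReal_one]
      _ = 1 := by simp
  -- from key to the conclusion
  have hpL_m : Measurable pL := by
    have : pL = fun ω => ((L : ℝ) + 1)⁻¹ * (f (θ0 ω) (h ω) + ∑ ℓ, f (θs ω ℓ) (h ω)) :=
      funext hpL
    rw [this]
    apply Measurable.const_mul
    apply Measurable.add
    · exact hf_meas.comp (hθ0.prodMk hh)
    · exact Finset.measurable_sum _ fun ℓ _ =>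
        hf_meas.comp (((measurable_pi_apply ℓ).comp hθs).prodMk hh)
  have hq_m : Measurable fun ω => mf (h ω) / pL ω := (hmf_m.comp hh).div hpL_m
  have hpL_nonneg : ∀ ω, 0 ≤ pL ω := by
    intro ω
    rw [hpL]
    apply mul_nonneg (by positivity)
    exact add_nonneg (hf_nonneg _ _) (Finset.sum_nonneg fun ℓ _ => hf_nonneg _ _)
  have hq_nonneg : ∀ ω, 0 ≤ mf (h ω) / pL ω :=
    fun ω => div_nonneg (hmf_nonneg _) (hpL_nonneg ω)
  have hq_int : Integrable (fun ω => mf (h ω) / pL ω) P := by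
    refine ⟨hq_m.aestronglyMeasurable, ?_⟩
    rw [hasFiniteIntegral_iff_ofReal (ae_of_all _ hq_nonneg)]
    exact lt_of_le_of_lt key ENNReal.one_lt_top
  have hq_le : (∫ ω, mf (h ω) / pL ω ∂P) ≤ 1 := by
    rw [integral_eq_lintegral_of_nonneg_ae (ae_of_all _ hq_nonneg) hq_m.aestronglyMeasurable]
    have := ENNReal.toReal_mono ENNReal.one_ne_top key
    simpa using this
  have hae : ∀ᵐ ω ∂P, -(Real.log (pL ω) - Real.log (mf (h ω))) ≤ mf (h ω) / pL ω - 1 := by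
    filter_upwards [hpos] with ω hω
    obtain ⟨h0, hs, -, -, hm⟩ := hω
    have hpLpos : 0 < pL ω := by
      rw [hpL]
      exact mul_pos (by positivity)
        (add_pos_of_pos_of_nonneg h0 (Finset.sum_nonneg fun ℓ _ => (hs ℓ).le))
    have hqpos : 0 < mf (h ω) / pL ω := div_pos hm hpLpos
    have hlog := Real.log_le_sub_one_of_pos hqpos
    rw [Real.log_div (ne_of_gt hm) (ne_of_gt hpLpos)] at hlog
    linarith
  have h1 : (∫ ω, -(Real.log (pL ω) - Real.log (mf (h ω))) ∂P)
      ≤ ∫ ω, (mf (h ω) / pL ω - 1) ∂P :=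
    integral_mono_ae hint_gap.neg (hq_int.sub (integrable_const 1)) hae
  rw [integral_neg] at h1
  have h2 : (∫ ω, (mf (h ω) / pL ω - 1) ∂P) = (∫ ω, mf (h ω) / pL ω ∂P) - 1 := by
    rw [integral_sub hq_int (integrable_const 1), integral_const]
    simp
  rw [h2] at h1
  linarith
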